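/- In the mean-field free phase with $n^* \to \infty$ and all nodes uncongested ($\bar\chi = 0$, $1 - \bar q = p/\mu$), the average particle density $\nu(p) = \sum_k P(k) \frac{a_k}{1-a_k}$ with $a_k = p + (1-\mu)\frac{k}{z}\frac{p}{\mu}$ is finite and strictly increasing for $0 < p < p_c = \frac{\mu}{\mu + (1-\mu)k_{max}/z}$, and diverges to $+\infty$ as $p \to p_c^-$. -/

import Mathlib

open Filter Topology

private lemma frac_mono_aux {x y : ℝ} (hx : 0 ≤ x) (hxy : x ≤ y) (hy : y < 1) :
    x / (1 - x) ≤ y / (1 - y) := by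
  rw [div_le_div_iff₀ (by linarith) (by linarith)]
  nlinarith

private lemma frac_strict_aux {x y : ℝ} (hx : 0 ≤ x) (hxy : x < y) (hy : y < 1) :
    x / (1 - x) < y / (1 - y) := by
  rw [div_lt_div_iff₀ (by linarith) (by linarith)]
  nlinarith

set_option maxHeartbeats 1000000 in
/-- In the mean-field free phase (`n* → ∞`, `χ̄ = 0`,
`1 - q̄ = p/μ`), the particle density `ν(p) = Σ_k P(k) a_k/(1-a_k)` with
`a_k = p + (1-μ)(k/z)(p/μ)` is strictly increasing on `(0, p_c)` and diverges
as `p → p_c⁻`, where `p_c = μ/(μ + (1-μ) k_max/z)`. -/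
theorem density_diverges_at_transition
    (D : Finset ℕ) (hD : D.Nonempty) (P : ℕ → ℝ) (μ z : ℝ)
    (hμ0 : 0 < μ) (hμ1 : μ < 1) (hz : 0 < z)
    (hPpos : ∀ k ∈ D, 0 ≤ P k) (hPmax : 0 < P (D.max' hD))
    (hPsum : ∑ k ∈ D, P k = 1)
    (a : ℕ → ℝ → ℝ) (ha : ∀ k p, a k p = p + (1 - μ) * ((k : ℝ) / z) * (p / μ))
    (ν : ℝ → ℝ) (hν : ∀ p, ν p = ∑ k ∈ D, P k * (a k p / (1 - a k p)))
    (pc : ℝ) (hpc : pc = μ / (μ + (1 - μ) * ((D.max' hD : ℝ) / z))) :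
    StrictMonoOn ν (Set.Ioo 0 pc)
    ∧ Tendsto ν (𝓝[Set.Ioo 0 pc] pc) atTop := by
  set M := D.max' hD with hM
  set c : ℕ → ℝ := fun k => 1 + (1 - μ) * ((k : ℝ) / z) / μ with hc
  have hac : ∀ k p, a k p = p * c k := by
    intro k p; rw [ha]; simp only [hc]; ring
  have hc1 : ∀ k : ℕ, 1 ≤ c k := by
    intro k
    have : 0 ≤ (1 - μ) * ((k : ℝ) / z) / μ :=
      div_nonneg (mul_nonneg (by linarith) (by positivity)) hμ0.le
    simp only [hc]; linarith
  have hcmono : ∀ k ∈ D, c k ≤ c M := by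
    intro k hk
    have hkM : (k : ℝ) ≤ (M : ℝ) := Nat.cast_le.mpr (D.le_max' k hk)
    simp only [hc]
    gcongr <;> linarith
  have hden : 0 < μ + (1 - μ) * ((M : ℝ) / z) := by
    have h1 : 0 ≤ ((M : ℝ) / z) := by positivity
    nlinarith
  have hpc0 : 0 < pc := by rw [hpc]; exact div_pos hμ0 hden
  have hpcM : pc * c M = 1 := by
    rw [hpc, div_mul_eq_mul_div, div_eq_one_iff_eq hden.ne']
    simp only [hc]
    field_simp
  -- bounds on a on the interval
  have hbound : ∀ p ∈ Set.Ioo (0:ℝ) pc, ∀ k ∈ D, 0 ≤ a k p ∧ a k p < 1 := by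
    intro p hp k hk
    have hck := hc1 k
    constructor
    · rw [hac]; have := hp.1; nlinarith
    · rw [hac]
      calc p * c k ≤ p * c M := by
            have := hcmono k hk; nlinarith [hp.1]
        _ < pc * c M := by
            have := hc1 M; nlinarith [hp.2]
        _ = 1 := hpcM
  have hmono : StrictMonoOn ν (Set.Ioo 0 pc) := by
    intro p hp q hq hpq
    rw [hν, hν]
    apply Finset.sum_lt_sum
    · intro k hk
      have h1 := hbound p hp k hk
      have h2 := hbound q hq k hk
      apply mul_le_mul_of_nonneg_left _ (hPpos k hk)
      apply frac_mono_aux h1.1 _ h2.2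
      rw [hac, hac]
      have := hc1 k
      nlinarith
    · refine ⟨M, (D.max'_mem hD), ?_⟩
      have h1 := hbound p hp M (D.max'_mem hD)
      have h2 := hbound q hq M (D.max'_mem hD)
      apply mul_lt_mul_of_pos_left _ hPmax
      apply frac_strict_aux h1.1 _ h2.2
      rw [hac, hac]
      have := hc1 M
      nlinarith
  refine ⟨hmono, ?_⟩
  -- divergence
  have hlow : ∀ p ∈ Set.Ioo (0:ℝ) pc,
      P M * ((1 - a M p)⁻¹ - 1) ≤ ν p := by
    intro p hp
    have hMb := hbound p hp M (D.max'_mem hD)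
    have hd : (0:ℝ) < 1 - a M p := by linarith [hMb.2]
    have heq : (1 - a M p)⁻¹ - 1 = a M p / (1 - a M p) := by
      field_simp
      ring
    rw [heq, hν]
    apply Finset.single_le_sum (f := fun k => P k * (a k p / (1 - a k p)))
      _ (D.max'_mem hD)
    intro k hk
    have hb := hbound p hp k hk
    have : (0:ℝ) < 1 - a k p := by linarith [hb.2]
    have : 0 ≤ a k p / (1 - a k p) := div_nonneg hb.1 (le_of_lt this)
    exact mul_nonneg (hPpos k hk) this
  apply tendsto_atTop_mono' _ _
    ((tendsto_atTop_add_const_right _ (-1)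
      ((tendsto_inv_nhdsGT_zero).comp
        (show Tendsto (fun p => 1 - a M p) (𝓝[Set.Ioo 0 pc] pc) (𝓝[>] 0) from ?_))).const_mul_atTop hPmax)
  · filter_upwards [eventually_mem_nhdsWithin] with p hp
    have := hlow p hp
    simpa [sub_eq_add_neg] using this
  · rw [tendsto_nhdsWithin_iff]
    constructor
    · have hcont : Tendsto (fun p => 1 - a M p) (𝓝 pc) (𝓝 (1 - pc * c M)) := by
        have : Continuous (fun p : ℝ => 1 - p * c M) := by continuity
        have h := this.tendsto pc
        refine h.congr fun p => by rw [hac]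
      rw [hpcM] at hcont
      simpa using hcont.mono_left nhdsWithin_le_nhds
    · filter_upwards [eventually_mem_nhdsWithin] with p hp
      have := (hbound p hp M (D.max'_mem hD)).2
      simpa [Set.mem_Ioi] using by linarith
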